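/- Let U and V be real normed spaces and let a : U × V → ℝ be a semilinear form satisfying the nonlinear inf-sup condition with constant M_a > 0. If u, ũ ∈ U and f, g ∈ V′ are such that a(u; v) = f(v) for all v ∈ V and a(ũ; v) = g(v) for all v ∈ V, then ‖u − ũ‖_U ≤ (1/M_a) ‖f − g‖_{V′}. -/

import Mathlib

/-- **A priori estimate from the nonlinear inf-sup condition.**
If the semilinear form `a : U → V →L[ℝ] ℝ` satisfies the nonlinear inf-sup condition
with constant `Ma > 0`, and `u, u'` solve the variational problems with data `f, g`
respectively, then `‖u - u'‖ ≤ (1 / Ma) * ‖f - g‖`. -/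
theorem nonlinear_infSup_apriori_estimate
    {U V : Type*}
    [NormedAddCommGroup U] [NormedSpace ℝ U]
    [NormedAddCommGroup V] [NormedSpace ℝ V]
    (a : U → V →L[ℝ] ℝ) (Ma : ℝ) (hMa : 0 < Ma)
    (hinfsup : ∀ w₁ w₂ : U, w₁ ≠ w₂ → ∀ c : ℝ, c < Ma →
      ∃ v : V, v ≠ 0 ∧ c < (a w₁ v - a w₂ v) / (‖w₁ - w₂‖ * ‖v‖))
    (u u' : U) (f g : StrongDual ℝ V)
    (hu : ∀ v : V, a u v = f v) (hu' : ∀ v : V, a u' v = g v) :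
    ‖u - u'‖ ≤ (1 / Ma) * ‖f - g‖ := by
  by_cases h : u = u'
  · simp [h]
    positivity
  · have hd : 0 < ‖u - u'‖ := by
      simpa [sub_eq_zero] using norm_pos_iff.2 (sub_ne_zero.2 h)
    have key : Ma * ‖u - u'‖ ≤ ‖f - g‖ := by
      by_contra hcon
      push_neg at hcon
      have hc : ‖f - g‖ / ‖u - u'‖ < Ma := (div_lt_iff₀ hd).2 (by linarith [mul_comm Ma ‖u - u'‖])
      obtain ⟨v, hv0, hv⟩ := hinfsup u u' h _ hc
      have hvn : 0 < ‖v‖ := norm_pos_iff.2 hv0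
      have heq : a u v - a u' v = (f - g) v := by
        simp [hu v, hu' v]
      have hbound : (f - g) v ≤ ‖f - g‖ * ‖v‖ :=
        le_trans (le_abs_self _) ((f - g).le_opNorm v)
      rw [heq, div_lt_div_iff₀ (by positivity) (by positivity)] at hv
      nlinarith
    rw [div_mul_eq_mul_div, le_div_iff₀ hMa]
    linarith [mul_comm ‖u - u'‖ Ma]
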